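/- If A ∈ ℝ^{n×n} is invertible and ‖A⁻¹‖₂ < 1 (operator norm induced by the Euclidean norm), then the absolute value equation A x - |x| = b has a unique solution x* for every b ∈ ℝⁿ. -/

import Mathlib

open scoped Matrix.Norms.L2Operator

noncomputable def enorm {n : ℕ} (v : Fin n → ℝ) : ℝ :=
  ‖(EuclideanSpace.equiv (Fin n) ℝ).symm v‖

def absVec {n : ℕ} (x : Fin n → ℝ) : Fin n → ℝ := fun i => |x i|

lemma absVec_lip {n : ℕ} (x y : EuclideanSpace ℝ (Fin n)) :
    ‖((EuclideanSpace.equiv (Fin n) ℝ).symm (absVec x - absVec y) : EuclideanSpace ℝ (Fin n))‖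
      ≤ ‖x - y‖ := by
  rw [EuclideanSpace.norm_eq, EuclideanSpace.norm_eq]
  apply Real.sqrt_le_sqrt
  apply Finset.sum_le_sum
  intro i _
  have h : |(absVec x - absVec y) i| ≤ |(x - y) i| := by
    simp only [absVec, Pi.sub_apply]
    exact abs_abs_sub_abs_le_abs_sub _ _
  have h2 : |(x - y) i| = ‖(x - y) i‖ := rfl
  simpa using pow_le_pow_left₀ (abs_nonneg _) h 2

/-- If `A` is invertible and `‖A⁻¹‖₂ < 1` (spectral norm), then the AVE
`A x - |x| = b` has a unique solution for every right-hand side `b`. -/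
theorem ave_existsUnique {n : ℕ} (A : Matrix (Fin n) (Fin n) ℝ)
    (hA : IsUnit A) (hnorm : ‖A⁻¹‖ < 1) (b : Fin n → ℝ) :
    ∃! x : Fin n → ℝ, A.mulVec x - absVec x = b := by
  have hdet : IsUnit A.det := (Matrix.isUnit_iff_isUnit_det A).mp hA
  have hequiv : ∀ x : Fin n → ℝ, A.mulVec x - absVec x = b ↔
      x = A⁻¹.mulVec (absVec x + b) := by
    intro x
    constructor
    · intro h
      have hx : A.mulVec x = absVec x + b := by rw [← h]; abel
      calc x = A⁻¹.mulVec (A.mulVec x) := by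
              rw [Matrix.mulVec_mulVec, Matrix.nonsing_inv_mul A hdet, Matrix.one_mulVec]
        _ = _ := by rw [hx]
    · intro h
      have hx : A.mulVec x = absVec x + b := by
        conv_lhs => rw [h]
        rw [Matrix.mulVec_mulVec, Matrix.mul_nonsing_inv A hdet, Matrix.one_mulVec]
      rw [hx]; abel
  set f : EuclideanSpace ℝ (Fin n) → EuclideanSpace ℝ (Fin n) :=
    fun x => (EuclideanSpace.equiv (Fin n) ℝ).symm (A⁻¹.mulVec (absVec x + b)) with hf
  have hlip : LipschitzWith ‖A⁻¹‖₊ f := by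
    apply LipschitzWith.of_dist_le_mul
    intro x y
    rw [dist_eq_norm, dist_eq_norm]
    have h1 : f x - f y =
        (EuclideanSpace.equiv (Fin n) ℝ).symm (A⁻¹.mulVec (absVec x - absVec y)) := by
      simp only [hf]
      ext i
      simp [Matrix.mulVec_sub, Matrix.mulVec_add]
    rw [h1]
    calc ‖((EuclideanSpace.equiv (Fin n) ℝ).symm (A⁻¹.mulVec (absVec x - absVec y)) :
            EuclideanSpace ℝ (Fin n))‖
        ≤ ‖A⁻¹‖ * ‖((EuclideanSpace.equiv (Fin n) ℝ).symm (absVec x - absVec y) :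
            EuclideanSpace ℝ (Fin n))‖ := Matrix.l2_opNorm_mulVec A⁻¹ _
      _ ≤ ‖A⁻¹‖ * ‖x - y‖ := by
          apply mul_le_mul_of_nonneg_left (absVec_lip x y) (norm_nonneg _)
  have hcontr : ContractingWith ‖A⁻¹‖₊ f := by
    refine ⟨?_, hlip⟩
    exact_mod_cast hnorm
  have hfix : ∀ x : EuclideanSpace ℝ (Fin n),
      Function.IsFixedPt f x ↔ A.mulVec x - absVec x = b := by
    intro x
    rw [hequiv x]
    constructor
    · intro h; exact (congrArg WithLp.ofLp h).symm
    · intro h; exact (congrArg (WithLp.toLp 2) h.symm : _)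
  have key : ∃! x : EuclideanSpace ℝ (Fin n), Function.IsFixedPt f x :=
    ⟨hcontr.fixedPoint f, hcontr.fixedPoint_isFixedPt,
      fun y hy => hcontr.fixedPoint_unique hy⟩
  obtain ⟨x₀, hx₀, hu⟩ := key
  exact ⟨x₀, (hfix _).mp hx₀, fun y hy => congrArg WithLp.ofLp (hu (WithLp.toLp 2 y) ((hfix _).mpr hy))⟩
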